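/- Let G be a forest in which every component is a star with at least 1 edge and less than k edges, and suppose G has at least 2k edges in total. Then there is a subset I of the components such that the components in I together have at least k edges and at most 2k vertices. -/

import Mathlib

open Finset

open scoped Classical in
/-- `G ∈ (c,k)`-LCP: there is a `c`-coloring such that each color has at least `k`
monochromatic edges. -/
def LCP {V : Type*} [Fintype V] (G : SimpleGraph V) (c k : ℕ) : Prop :=
  ∃ φ : V → Fin c, ∀ i : Fin c,
    k ≤ (G.edgeFinset.filter (fun e => ∀ v ∈ e, φ v = i)).card

open scoped Classical in
/-- The connected component `C` of `G` is a star `K_{1,j}` with center `u`: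
its vertex set is `u` together with the `j = deg u ≥ 1` neighbors of `u`,
each of which is a leaf (degree 1). -/
def IsStarComponent {V : Type*} [Fintype V] (G : SimpleGraph V)
    (C : G.ConnectedComponent) (u : V) : Prop :=
  C.supp = insert u (G.neighborSet u) ∧ 1 ≤ G.degree u ∧
    ∀ v ∈ G.neighborSet u, G.degree v = 1

lemma greedy_aux {α : Type*} (s : Finset α) (f : α → ℕ) (k : ℕ)
    (h1 : ∀ a ∈ s, 1 ≤ f a) (h2 : ∀ a ∈ s, f a < k)
    (hsum : 2 * k ≤ ∑ a ∈ s, f a) :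
    ∃ I ⊆ s, k ≤ ∑ a ∈ I, f a ∧ (∑ a ∈ I, f a) + I.card ≤ 2 * k := by
  classical
  rcases Nat.eq_zero_or_pos k with hk | hk
  · exact ⟨∅, empty_subset _, by simp [hk]⟩
  · set T := s.powerset.filter (fun J => k ≤ ∑ a ∈ J, f a) with hT
    have hsT : s ∈ T := by
      simp only [hT, mem_filter, mem_powerset]
      exact ⟨le_rfl, le_trans (by omega) hsum⟩
    obtain ⟨I, hIT, hmin⟩ := T.exists_min_image Finset.card ⟨s, hsT⟩
    simp only [hT, mem_filter, mem_powerset] at hIT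
    obtain ⟨hIs, hIk⟩ := hIT
    have hne : I.Nonempty := by
      rcases I.eq_empty_or_nonempty with h | h
      · rw [h] at hIk; simp at hIk; omega
      · exact h
    obtain ⟨a₀, ha₀I, hmind⟩ := I.exists_min_image f hne
    set d := f a₀ with hd
    have hd1 : 1 ≤ d := h1 a₀ (hIs ha₀I)
    have hdk : d < k := h2 a₀ (hIs ha₀I)
    have herase : ¬ k ≤ ∑ a ∈ I.erase a₀, f a := by
      intro hcon
      have hmem : I.erase a₀ ∈ T := by
        simp only [hT, mem_filter, mem_powerset]
        exact ⟨(erase_subset _ _).trans hIs, hcon⟩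
      have := hmin _ hmem
      have hlt := card_erase_lt_of_mem ha₀I
      omega
    have hsplit : ∑ a ∈ I, f a = d + ∑ a ∈ I.erase a₀, f a := (Finset.add_sum_erase I f ha₀I).symm
    have hS : ∑ a ∈ I, f a ≤ k + d - 1 := by omega
    have hcard : I.card * d ≤ ∑ a ∈ I, f a := by
      calc I.card * d = ∑ _a ∈ I, d := by rw [Finset.sum_const, smul_eq_mul]
        _ ≤ ∑ a ∈ I, f a := Finset.sum_le_sum hmind
    refine ⟨I, hIs, hIk, ?_⟩
    have C1 : (1:ℤ) ≤ (d:ℤ) := by exact_mod_cast hd1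
    have D1 : (d:ℤ) ≤ (k:ℤ) - 1 := by
      have : d + 1 ≤ k := hdk
      push_cast at this ⊢; linarith
    have A1 : ((∑ a ∈ I, f a : ℕ) : ℤ) ≤ (k:ℤ) + d - 1 := by
      have : ∑ a ∈ I, f a + 1 ≤ k + d := by omega
      push_cast at this ⊢; linarith
    have B1 : (I.card : ℤ) * d ≤ ((∑ a ∈ I, f a : ℕ) : ℤ) := by exact_mod_cast hcard
    have h5 : (I.card : ℤ) * d ≤ ((k:ℤ) + 1 - d) * d := by
      nlinarith [mul_nonneg (by linarith : (0:ℤ) ≤ (d:ℤ) - 1) (by linarith : (0:ℤ) ≤ (k:ℤ) - 1 - d)]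
    have h6 : (I.card : ℤ) ≤ (k:ℤ) + 1 - d := le_of_mul_le_mul_right h5 (by linarith)
    have : ((∑ a ∈ I, f a : ℕ) : ℤ) + I.card ≤ 2 * k := by linarith
    exact_mod_cast this

open scoped Classical in
theorem stmt_7 {V : Type*} [Fintype V] (G : SimpleGraph V) (k : ℕ)
    (hstar : ∀ C : G.ConnectedComponent, ∃ u : V, IsStarComponent G C u ∧ G.degree u < k)
    (hm : 2 * k ≤ G.edgeFinset.card) :
    ∃ I : Finset G.ConnectedComponent,
      k ≤ (G.edgeFinset.filter (fun e => ∀ v ∈ e, G.connectedComponentMk v ∈ I)).card ∧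
      (Finset.univ.filter (fun v => G.connectedComponentMk v ∈ I)).card ≤ 2 * k := by
  classical
  haveI : Fintype G.ConnectedComponent := Fintype.ofFinite _
  choose ctr hc hdeg using hstar
  set f : G.ConnectedComponent → ℕ := fun C => G.degree (ctr C) with hf
  set g : Sym2 V → G.ConnectedComponent := fun e => G.connectedComponentMk e.out.1 with hg
  have hkey : ∀ e ∈ G.edgeFinset, ∀ v ∈ e, G.connectedComponentMk v = g e := by
    intro e he
    induction e with
    | _ a b =>
      rw [SimpleGraph.mem_edgeFinset, SimpleGraph.mem_edgeSet] at he
      have hab : G.connectedComponentMk a = G.connectedComponentMk b :=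
        SimpleGraph.ConnectedComponent.sound he.reachable
      intro v hv
      have hout : (s(a,b) : Sym2 V).out.1 ∈ s(a,b) := Sym2.out_fst_mem _
      rw [Sym2.mem_iff] at hv hout
      rcases hv with rfl | rfl <;> rcases hout with h | h <;> simp [hg, h, hab]
  have huC : ∀ C : G.ConnectedComponent, G.connectedComponentMk (ctr C) = C := by
    intro C
    have : ctr C ∈ C.supp := by rw [(hc C).1]; exact Set.mem_insert _ _
    rwa [SimpleGraph.ConnectedComponent.mem_supp_iff] at this
  have hfilter : ∀ (I : Finset G.ConnectedComponent),
      G.edgeFinset.filter (fun e => ∀ v ∈ e, G.connectedComponentMk v ∈ I)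
        = G.edgeFinset.filter (fun e => g e ∈ I) := by
    intro I
    apply filter_congr
    intro e he
    constructor
    · intro h
      have := h e.out.1 (Sym2.out_fst_mem e)
      rwa [hkey e he e.out.1 (Sym2.out_fst_mem e)] at this
    · intro h v hv
      rw [hkey e he v hv]; exact h
  have hedgecount : ∀ C : G.ConnectedComponent,
      (G.edgeFinset.filter (fun e => g e = C)).card = f C := by
    intro C
    have heq : G.edgeFinset.filter (fun e => g e = C) = G.incidenceFinset (ctr C) := by
      ext e
      induction e with
      | _ a b =>
        simp only [mem_filter, SimpleGraph.mem_incidenceFinset]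
        constructor
        · rintro ⟨he, hgC⟩
          have hadj : G.Adj a b := by rwa [SimpleGraph.mem_edgeFinset, SimpleGraph.mem_edgeSet] at he
          have ha : G.connectedComponentMk a = C := by
            rw [hkey _ he a (by simp)]; exact hgC
          have hb : G.connectedComponentMk b = C := by
            rw [hkey _ he b (by simp)]; exact hgC
          have hasupp : a ∈ C.supp := by rwa [SimpleGraph.ConnectedComponent.mem_supp_iff]
          have hbsupp : b ∈ C.supp := by rwa [SimpleGraph.ConnectedComponent.mem_supp_iff]
          rw [(hc C).1, Set.mem_insert_iff] at hasupp hbsupp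
          have hmem : ctr C ∈ s(a, b) := by
            rw [Sym2.mem_iff]
            by_contra hcon
            push_neg at hcon
            obtain ⟨hne1, hne2⟩ := hcon
            have haN : a ∈ G.neighborSet (ctr C) := hasupp.resolve_left (fun h => hne1 h.symm)
            have hbN : b ∈ G.neighborSet (ctr C) := hbsupp.resolve_left (fun h => hne2 h.symm)
            have hleaf : G.degree a = 1 := (hc C).2.2 a haN
            have hub : ctr C ≠ b := G.ne_of_adj hbN
            have hsub : ({ctr C, b} : Finset V) ⊆ G.neighborFinset a := by
              intro x hx
              rw [mem_insert, mem_singleton] at hx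
              rcases hx with rfl | rfl
              · rw [SimpleGraph.mem_neighborFinset]; exact (haN : G.Adj (ctr C) a).symm
              · rw [SimpleGraph.mem_neighborFinset]; exact hadj
            have h2le : 2 ≤ G.degree a := by
              have := Finset.card_le_card hsub
              rwa [Finset.card_pair (by exact fun h => hub h)] at this
            omega
          rw [SimpleGraph.mem_edgeFinset] at he
          exact ⟨he, hmem⟩
        · rintro ⟨he, hmem⟩
          have heF : s(a, b) ∈ G.edgeFinset := by rwa [SimpleGraph.mem_edgeFinset]
          refine ⟨heF, ?_⟩
          rw [← hkey _ heF (ctr C) hmem, huC]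
    rw [heq, SimpleGraph.card_incidenceFinset_eq_degree]
  have hvert : ∀ C : G.ConnectedComponent,
      (Finset.univ.filter (fun v => G.connectedComponentMk v = C)).card = f C + 1 := by
    intro C
    have heq : Finset.univ.filter (fun v => G.connectedComponentMk v = C)
        = insert (ctr C) (G.neighborFinset (ctr C)) := by
      ext v
      simp only [mem_filter, mem_univ, true_and, mem_insert, SimpleGraph.mem_neighborFinset]
      rw [← SimpleGraph.ConnectedComponent.mem_supp_iff, (hc C).1, Set.mem_insert_iff,
        SimpleGraph.mem_neighborSet]
    have hnot : ctr C ∉ G.neighborFinset (ctr C) := by simp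
    rw [heq, Finset.card_insert_of_notMem hnot, SimpleGraph.card_neighborFinset_eq_degree]
  have hedgesum : ∀ (I : Finset G.ConnectedComponent),
      (G.edgeFinset.filter (fun e => ∀ v ∈ e, G.connectedComponentMk v ∈ I)).card
        = ∑ C ∈ I, f C := by
    intro I
    rw [hfilter I]
    rw [Finset.card_eq_sum_card_fiberwise (f := g) (s := G.edgeFinset.filter (fun e => g e ∈ I)) (t := I)
      (fun e he => (mem_filter.mp he).2)]
    refine Finset.sum_congr rfl fun C hC => ?_
    rw [Finset.filter_filter]
    rw [← hedgecount C]
    congr 1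
    apply filter_congr
    intro e he
    constructor
    · exact fun h => h.2
    · exact fun h => ⟨h ▸ hC, h⟩
  have hvertsum : ∀ (I : Finset G.ConnectedComponent),
      (Finset.univ.filter (fun v => G.connectedComponentMk v ∈ I)).card
        = ∑ C ∈ I, (f C + 1) := by
    intro I
    rw [Finset.card_eq_sum_card_fiberwise (f := fun v => G.connectedComponentMk v)
      (s := Finset.univ.filter (fun v => G.connectedComponentMk v ∈ I)) (t := I)
      (fun v hv => (mem_filter.mp hv).2)]
    refine Finset.sum_congr rfl fun C hC => ?_
    rw [Finset.filter_filter]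
    rw [← hvert C]
    congr 1
    apply filter_congr
    intro v hv
    constructor
    · exact fun h => h.2
    · exact fun h => ⟨by simp only [h]; exact hC, h⟩
  have htotal : 2 * k ≤ ∑ C ∈ Finset.univ, f C := by
    rw [← hedgesum Finset.univ]
    refine le_trans hm (le_of_eq ?_)
    congr 1
    rw [Finset.filter_true_of_mem (fun e _ => fun v _ => mem_univ _)]
  obtain ⟨I, _, hIk, hI2k⟩ := greedy_aux Finset.univ f k
    (fun C _ => (hc C).2.1) (fun C _ => hdeg C) htotal
  refine ⟨I, ?_, ?_⟩
  · rw [hedgesum I]; exact hIk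
  · rw [hvertsum I, Finset.sum_add_distrib, Finset.sum_const, smul_eq_mul, mul_one]
    exact hI2k
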